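/- Main theorem, part (ii): Let q be a prime power and let c be a positive integer such that c < q − 1 and c divides q − 1. Then for every integer n satisfying (q² − 1)/c + 2 ≤ n (equivalently c·n ≥ q² − 1 + 2c) and c(c+1)·n ≤ (c+1)q² + (c+3)q − 2(c−1), we have χ_l(K_n, c) = q + 1. -/

import Mathlib

set_option linter.unusedSectionVars false
set_option linter.unusedVariables false
set_option maxHeartbeats 1000000

open Finset Polynomial

section DoubleCount
variable {ι α : Type*} [DecidableEq α]

lemma sum_card_biUnion (T : Finset ι) (M : ι → Finset α) :
    ∑ v ∈ T, (M v).card = ∑ y ∈ T.biUnion M, (T.filter (fun v => y ∈ M v)).card := by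
  classical
  have h : ∀ v ∈ T, (M v).card = ∑ y ∈ T.biUnion M, if y ∈ M v then 1 else 0 := by
    intro v hv
    have h2 : (T.biUnion M).filter (fun y => y ∈ M v) = M v := by
      ext y
      simp only [mem_filter, mem_biUnion]
      exact ⟨fun h => h.2, fun hy => ⟨⟨v, hv, hy⟩, hy⟩⟩
    calc (M v).card = ((T.biUnion M).filter (fun y => y ∈ M v)).card := by rw [h2]
      _ = ∑ y ∈ T.biUnion M, if y ∈ M v then 1 else 0 := Finset.card_filter _ _
  rw [Finset.sum_congr rfl h, Finset.sum_comm]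
  exact Finset.sum_congr rfl fun y _ => (Finset.card_filter _ _).symm

lemma sum_card_sq_biUnion (T : Finset ι) (M : ι → Finset α) :
    ∑ y ∈ T.biUnion M, ((T.filter (fun v => y ∈ M v)).card)^2
      = ∑ v ∈ T, ∑ w ∈ T, ((M v) ∩ (M w)).card := by
  classical
  have h : ∀ v ∈ T, ∀ w ∈ T, ((M v) ∩ (M w)).card
      = ∑ y ∈ T.biUnion M, if y ∈ M v ∧ y ∈ M w then 1 else 0 := by
    intro v hv w _
    have h2 : (T.biUnion M).filter (fun y => y ∈ M v ∧ y ∈ M w) = M v ∩ M w := by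
      ext y
      simp only [mem_filter, mem_biUnion, mem_inter]
      exact ⟨fun h => h.2, fun hy => ⟨⟨v, hv, hy.1⟩, hy⟩⟩
    calc ((M v) ∩ (M w)).card
        = ((T.biUnion M).filter (fun y => y ∈ M v ∧ y ∈ M w)).card := by rw [h2]
      _ = ∑ y ∈ T.biUnion M, if y ∈ M v ∧ y ∈ M w then 1 else 0 := Finset.card_filter _ _
  calc ∑ y ∈ T.biUnion M, ((T.filter (fun v => y ∈ M v)).card)^2
      = ∑ y ∈ T.biUnion M, ∑ v ∈ T, ∑ w ∈ T, (if y ∈ M v ∧ y ∈ M w then 1 else 0) := by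
        apply Finset.sum_congr rfl
        intro y _
        rw [sq, Finset.card_filter, Finset.sum_mul_sum]
        apply Finset.sum_congr rfl; intro v _
        apply Finset.sum_congr rfl; intro w _
        by_cases h1 : y ∈ M v <;> by_cases h2 : y ∈ M w <;> simp [h1, h2]
    _ = ∑ v ∈ T, ∑ w ∈ T, ((M v) ∩ (M w)).card := by
        rw [Finset.sum_comm]
        apply Finset.sum_congr rfl; intro v hv
        rw [Finset.sum_comm]
        apply Finset.sum_congr rfl; intro w hw
        exact (h v hv w hw).symm

end DoubleCount
lemma int_consec (z : ℤ) : 0 ≤ z * (z - 1) := by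
  rcases le_or_gt 1 z with h | h
  · nlinarith
  · nlinarith

theorem upper_exists (q c n : ℕ) (hc : 0 < c)
    (hhigh : (c : ℤ) * (c + 1) * n ≤ (c + 1) * q ^ 2 + (c + 3) * q - 2 * (c - 1))
    (L : Fin n → Finset ℕ) (hcard : ∀ v, (L v).card = q + 1)
    (hint : ∀ u v, u ≠ v → ((L u) ∩ (L v)).card ≤ c) :
    ∃ f : Fin n → ℕ, Function.Injective f ∧ ∀ v, f v ∈ L v := by
  classical
  rw [← Finset.all_card_le_biUnion_card_iff_exists_injective]
  intro A
  by_contra hA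
  push_neg at hA
  set U := A.biUnion L with hU
  by_cases hdeg : ∀ x ∈ U, (A.filter (fun v => x ∈ L v)).card ≤ q + 1
  · have h1 : A.card * (q + 1) = ∑ v ∈ A, (L v).card := by
      rw [Finset.sum_congr rfl fun v _ => hcard v, Finset.sum_const, smul_eq_mul]
    rw [sum_card_biUnion] at h1
    have h2 : ∑ y ∈ U, (A.filter (fun v => y ∈ L v)).card ≤ U.card * (q + 1) := by
      calc ∑ y ∈ U, (A.filter (fun v => y ∈ L v)).card ≤ ∑ _y ∈ U, (q + 1) :=
            Finset.sum_le_sum hdeg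
        _ = U.card * (q + 1) := by rw [Finset.sum_const, smul_eq_mul]
    have : A.card * (q + 1) ≤ U.card * (q + 1) := h1 ▸ h2
    have hle : A.card ≤ U.card := Nat.le_of_mul_le_mul_right this (Nat.succ_pos q)
    omega
  · push_neg at hdeg
    obtain ⟨x, hxU, hx⟩ := hdeg
    obtain ⟨T, hTsub, hTcard0⟩ := Finset.exists_subset_card_eq hx
    have hTcard : T.card = q + 2 := by omega
    have hT : ∀ v ∈ T, v ∈ A ∧ x ∈ L v := fun v hv => Finset.mem_filter.mp (hTsub hv)
    set M : Fin n → Finset ℕ := fun v => (L v).erase x with hM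
    set U' := T.biUnion M with hU'
    set d : ℕ → ℕ := fun y => (T.filter (fun v => y ∈ M v)).card with hd
    -- sum of degrees
    have hMcard : ∀ v ∈ T, (M v).card = q := by
      intro v hv
      rw [hM]; rw [Finset.card_erase_of_mem (hT v hv).2, hcard v]; omega
    have hSum : ∑ y ∈ U', d y = (q + 2) * q := by
      rw [hd, ← sum_card_biUnion]
      rw [Finset.sum_congr rfl hMcard, Finset.sum_const, smul_eq_mul, hTcard]
    -- sum of squares bound
    have hPair : ∀ v ∈ T, ∀ w ∈ T, v ≠ w → ((M v) ∩ (M w)).card ≤ c - 1 := by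
      intro v hv w hw hvw
      have hinter : (M v) ∩ (M w) = ((L v) ∩ (L w)).erase x := by
        rw [hM]; ext y;
        simp only [Finset.mem_inter, Finset.mem_erase]
        tauto
      rw [hinter, Finset.card_erase_of_mem (Finset.mem_inter.mpr ⟨(hT v hv).2, (hT w hw).2⟩)]
      exact Nat.sub_le_sub_right (hint v w hvw) 1
    have hSq : ∑ y ∈ U', (d y)^2 ≤ (q + 2) * q + (q + 2) * ((q + 1) * (c - 1)) := by
      rw [hd, sum_card_sq_biUnion]
      have hrow : ∀ v ∈ T, ∑ w ∈ T, ((M v) ∩ (M w)).card ≤ q + (q + 1) * (c - 1) := by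
        intro v hv
        rw [← Finset.add_sum_erase _ _ hv]
        have h1 : ((M v) ∩ (M v)).card = q := by rw [Finset.inter_self]; exact hMcard v hv
        have h2 : ∑ w ∈ T.erase v, ((M v) ∩ (M w)).card ≤ (q + 1) * (c - 1) := by
          calc ∑ w ∈ T.erase v, ((M v) ∩ (M w)).card ≤ ∑ _w ∈ T.erase v, (c - 1) :=
                Finset.sum_le_sum fun w hw =>
                  hPair v hv w (Finset.mem_of_mem_erase hw)
                    (fun h => (Finset.mem_erase.mp hw).1 h.symm)
            _ = (T.erase v).card * (c - 1) := by rw [Finset.sum_const, smul_eq_mul]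
            _ ≤ (q + 1) * (c - 1) := by
                apply Nat.mul_le_mul_right
                rw [Finset.card_erase_of_mem hv, hTcard]; omega
        omega
      calc ∑ v ∈ T, ∑ w ∈ T, ((M v) ∩ (M w)).card ≤ ∑ _v ∈ T, (q + (q + 1) * (c - 1)) :=
            Finset.sum_le_sum hrow
        _ = (q + 2) * (q + (q + 1) * (c - 1)) := by rw [Finset.sum_const, smul_eq_mul, hTcard]
        _ = (q + 2) * q + (q + 2) * ((q + 1) * (c - 1)) := by ring
    -- pointwise tangent bound, summed, in ℤ
    have hTan : (2 * c + 1 : ℤ) * ((q + 2) * q) - c * (c + 1) * U'.card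
        ≤ ∑ y ∈ U', ((d y : ℤ))^2 := by
      have h1 : ∀ y ∈ U', (2 * c + 1 : ℤ) * (d y) - c * (c + 1) ≤ ((d y : ℤ))^2 := by
        intro y _
        have := int_consec ((d y : ℤ) - c)
        nlinarith
      calc (2 * c + 1 : ℤ) * ((q + 2) * q) - c * (c + 1) * U'.card
          = ∑ y ∈ U', ((2 * c + 1 : ℤ) * (d y) - c * (c + 1)) := by
            rw [Finset.sum_sub_distrib, ← Finset.mul_sum, Finset.sum_const, nsmul_eq_mul]
            have : ((∑ y ∈ U', (d y : ℤ))) = ((q + 2) * q : ℤ) := by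
              rw [← Nat.cast_sum]; rw [hSum]; push_cast; ring
            rw [this]; ring
        _ ≤ ∑ y ∈ U', ((d y : ℤ))^2 := Finset.sum_le_sum h1
    have hSqZ : ∑ y ∈ U', ((d y : ℤ))^2 ≤ (q + 2) * q + (q + 2) * ((q + 1) * ((c : ℤ) - 1)) := by
      have := hSq
      have hcast : ((∑ y ∈ U', (d y)^2 : ℕ) : ℤ) = ∑ y ∈ U', ((d y : ℤ))^2 := by push_cast; rfl
      have h2 : ((c : ℤ) - 1) = ((c - 1 : ℕ) : ℤ) := by
        rw [Nat.cast_sub hc]; norm_num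
      rw [h2]
      calc ∑ y ∈ U', ((d y : ℤ))^2 = ((∑ y ∈ U', (d y)^2 : ℕ) : ℤ) := hcast.symm
        _ ≤ (((q + 2) * q + (q + 2) * ((q + 1) * (c - 1)) : ℕ) : ℤ) := by exact_mod_cast hSq
        _ = (q + 2) * q + (q + 2) * ((q + 1) * ((c - 1 : ℕ) : ℤ)) := by push_cast; ring
    -- conclude U'.card ≥ n
    have hbig : (n : ℤ) ≤ U'.card := by
      have hcc : (0 : ℤ) < c * (c + 1) := by positivity
      have key : (c : ℤ) * (c + 1) * n ≤ c * (c + 1) * U'.card := by nlinarith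
      exact le_of_mul_le_mul_left key hcc
    -- but U'.card + 2 ≤ n
    have hsmall : U'.card + 2 ≤ n := by
      have hsub : U' ⊆ U.erase x := by
        intro y hy
        obtain ⟨v, hvT, hyM⟩ := Finset.mem_biUnion.mp hy
        rw [hM] at hyM
        exact Finset.mem_erase.mpr ⟨(Finset.mem_erase.mp hyM).1,
          Finset.mem_biUnion.mpr ⟨v, (hT v hvT).1, (Finset.mem_erase.mp hyM).2⟩⟩
      have h1 : U'.card ≤ U.card - 1 := by
        calc U'.card ≤ (U.erase x).card := Finset.card_le_card hsub
          _ = U.card - 1 := Finset.card_erase_of_mem hxU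
      have h2 : U.card < A.card := hA
      have h3 : A.card ≤ n := by
        calc A.card ≤ (Finset.univ : Finset (Fin n)).card := Finset.card_le_card (Finset.subset_univ A)
          _ = n := by rw [Finset.card_univ, Fintype.card_fin]
      have hU1 : 1 ≤ U.card := Finset.card_pos.mpr ⟨x, hxU⟩
      omega
    have : ((U'.card + 2 : ℕ) : ℤ) ≤ n := by exact_mod_cast hsmall
    push_cast at this
    linarith

section Constr
variable {F : Type*} [Field F] [Fintype F] [DecidableEq F]

/-- the `c`-th roots of unity, as a finset of the field -/
def rootsC (F : Type*) [Field F] [Fintype F] [DecidableEq F] (c : ℕ) : Finset F :=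
  univ.filter fun h => h ^ c = 1

lemma card_rootsC {q c : ℕ} (hF : Fintype.card F = q) (hc : 0 < c)
    (hq1 : 0 < q - 1) (hdvd : c ∣ q - 1) : (rootsC F c).card = c := by
  obtain ⟨g, hg⟩ := IsCyclic.exists_ofOrder_eq_natCard (α := Fˣ)
  have hord : orderOf ((g : F)) = q - 1 := by
    rw [orderOf_units, hg, Nat.card_eq_fintype_card, Fintype.card_units, hF]
  have hprim : IsPrimitiveRoot ((g : F)) (q - 1) := hord ▸ IsPrimitiveRoot.orderOf (g : F)
  obtain ⟨m, hm⟩ := hdvd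
  have hprim2 : IsPrimitiveRoot ((g : F) ^ m) c := hprim.pow hq1 (by rw [hm, mul_comm])
  have hcard := hprim2.card_nthRootsFinset
  have : rootsC F c = nthRootsFinset c (1 : F) := by
    ext x
    rw [mem_nthRootsFinset hc, rootsC, mem_filter]
    simp
  rw [this, hcard]

lemma one_mem_rootsC {c : ℕ} : (1 : F) ∈ rootsC F c := by simp [rootsC]

lemma ne_zero_of_mem_rootsC {c : ℕ} (hc : 0 < c) {h : F} (hh : h ∈ rootsC F c) : h ≠ 0 := by
  rintro rfl
  rw [rootsC, mem_filter, zero_pow hc.ne'] at hh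
  exact zero_ne_one hh.2

lemma mul_mem_rootsC {c : ℕ} {h g : F} (hh : h ∈ rootsC F c) (hg : g ∈ rootsC F c) :
    h * g ∈ rootsC F c := by
  simp only [rootsC, mem_filter, mem_univ, true_and] at *
  rw [mul_pow, hh, hg, one_mul]

lemma inv_mem_rootsC {c : ℕ} (hc : 0 < c) {h : F} (hh : h ∈ rootsC F c) :
    h ^ (c - 1) ∈ rootsC F c ∧ h * h ^ (c - 1) = 1 := by
  simp only [rootsC, mem_filter, mem_univ, true_and] at *
  constructor
  · rw [← pow_mul, mul_comm, pow_mul, hh, one_pow]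
  · have h1 : c - 1 + 1 = c := Nat.succ_pred_eq_of_pos hc
    rw [← pow_succ']
    rw [h1, hh]

/-- scalar action on the plane -/
def act (h : F) (x : F × F) : F × F := (h * x.1, h * x.2)

lemma act_act (h g : F) (x : F × F) : act h (act g x) = act (h * g) x := by
  simp [act]; constructor <;> ring

lemma act_one (x : F × F) : act (1 : F) x = x := by simp [act]

lemma act_inj {h : F} (hh : h ≠ 0) {x y : F × F} (hxy : act h x = act h y) : x = y := by
  simp only [act, Prod.mk.injEq, Prod.ext_iff] at hxy ⊢
  exact ⟨mul_left_cancel₀ hh hxy.1, mul_left_cancel₀ hh hxy.2⟩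

lemma act_eq_zero_iff {h : F} (hh : h ≠ 0) {x : F × F} : act h x = 0 ↔ x = 0 := by
  simp only [act, Prod.ext_iff, Prod.fst_zero, Prod.snd_zero, mul_eq_zero]
  tauto

/-- orbit of a point -/
def Orb (c : ℕ) (x : F × F) : Finset (F × F) :=
  univ.filter fun y => ∃ h ∈ rootsC F c, y = act h x

lemma mem_orb_self (c : ℕ) (x : F × F) : x ∈ Orb c x := by
  simp only [Orb, mem_filter, mem_univ, true_and]
  exact ⟨1, one_mem_rootsC, (act_one x).symm⟩

noncomputable instance vLinOrd : LinearOrder (F × F) :=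
  LinearOrder.lift' (fun v => ((Fintype.equivFin (F × F)) v : Fin (Fintype.card (F × F))))
    (Equiv.injective _)

noncomputable def phi (c : ℕ) (x : F × F) : F × F :=
  (Orb c x).min' ⟨x, mem_orb_self c x⟩

lemma orb_act {c : ℕ} (hc : 0 < c) {h : F} (hh : h ∈ rootsC F c) (x : F × F) :
    Orb c (act h x) = Orb c x := by
  ext y
  simp only [Orb, mem_filter, mem_univ, true_and]
  constructor
  · rintro ⟨g, hg, rfl⟩
    exact ⟨g * h, mul_mem_rootsC hg hh, (act_act g h x)⟩
  · rintro ⟨g, hg, rfl⟩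
    obtain ⟨hinv, hprod⟩ := inv_mem_rootsC hc hh
    refine ⟨g * h ^ (c - 1), mul_mem_rootsC hg hinv, ?_⟩
    rw [act_act, mul_assoc, mul_comm (h ^ (c-1)) h, hprod, mul_one]

lemma phi_act {c : ℕ} (hc : 0 < c) {h : F} (hh : h ∈ rootsC F c) (x : F × F) :
    phi c (act h x) = phi c x := by
  unfold phi
  congr 1
  exact orb_act hc hh x

lemma phi_spec (c : ℕ) (x : F × F) : ∃ h ∈ rootsC F c, phi c x = act h x := by
  have := Finset.min'_mem (Orb c x) ⟨x, mem_orb_self c x⟩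
  have h2 : phi c x ∈ univ.filter (fun y => ∃ h ∈ rootsC F c, y = act h x) := this
  exact (mem_filter.mp h2).2

lemma rel_of_phi_eq {c : ℕ} (hc : 0 < c) {x y : F × F} (hxy : phi c x = phi c y) :
    ∃ h ∈ rootsC F c, y = act h x := by
  obtain ⟨h₁, hh₁, he₁⟩ := phi_spec c x
  obtain ⟨h₂, hh₂, he₂⟩ := phi_spec c y
  obtain ⟨hinv, hprod⟩ := inv_mem_rootsC hc hh₂
  refine ⟨h₂ ^ (c - 1) * h₁, mul_mem_rootsC hinv hh₁, ?_⟩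
  have : act h₂ y = act h₁ x := by rw [← he₁, ← he₂, hxy]
  calc y = act (h₂ ^ (c-1) * h₂) y := by
          rw [mul_comm, hprod, act_one]
    _ = act (h₂ ^ (c-1)) (act h₂ y) := (act_act _ _ _).symm
    _ = act (h₂ ^ (c-1)) (act h₁ x) := by rw [this]
    _ = act (h₂ ^ (c-1) * h₁) x := act_act _ _ _

lemma phi_zero (c : ℕ) (hc : 0 < c) : phi c (0 : F × F) = 0 := by
  have h0 : Orb c (0 : F × F) = {0} := by
    ext y
    simp only [Orb, mem_filter, mem_univ, true_and, mem_singleton]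
    constructor
    · rintro ⟨h, _, rfl⟩; simp [act]
    · rintro rfl; exact ⟨1, one_mem_rootsC, by ext <;> simp [act]⟩
  unfold phi
  simp [h0]

lemma phi_eq_zero_iff {c : ℕ} (hc : 0 < c) {x : F × F} : phi c x = 0 ↔ x = 0 := by
  constructor
  · intro h
    have : phi c x = phi c 0 := by rw [h, phi_zero c hc]
    obtain ⟨g, hg, he⟩ := rel_of_phi_eq hc this
    have : (0 : F × F) = act g x := he
    rw [eq_comm, act_eq_zero_iff (ne_zero_of_mem_rootsC hc hg)] at this
    exact this
  · rintro rfl; exact phi_zero c hc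



def dotF (a x : F × F) : F := a.1 * x.1 + a.2 * x.2

def lineF (a : F × F) : Finset (F × F) := univ.filter fun x => dotF a x = 1

lemma zero_not_mem_line (a : F × F) : (0 : F × F) ∉ lineF a := by
  intro h; rw [lineF, mem_filter] at h; simp [dotF] at h

lemma line_card {q : ℕ} (hF : Fintype.card F = q) {a : F × F} (ha : a ≠ 0) :
    (lineF a).card = q := by
  by_cases ha2 : a.2 ≠ 0
  · have himg : lineF a = univ.image (fun t : F => (t, (1 - a.1 * t) * a.2⁻¹)) := by
      ext x
      simp only [lineF, mem_filter, mem_univ, true_and, mem_image]; simp only [dotF]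
      constructor
      · intro h
        refine ⟨x.1, ?_⟩
        have hx2 : x.2 = (1 - a.1 * x.1) * a.2⁻¹ := by
          field_simp
          linear_combination h
        rw [← hx2]
      · rintro ⟨t, rfl⟩
        field_simp
        ring
    rw [himg, Finset.card_image_of_injective _ (fun s t hst => (Prod.ext_iff.mp hst).1),
      Finset.card_univ, hF]
  · push_neg at ha2
    have ha1 : a.1 ≠ 0 := by
      intro h1
      exact ha (Prod.ext h1 ha2)
    have himg : lineF a = univ.image (fun t : F => (a.1⁻¹, t)) := by
      ext x
      simp only [lineF, mem_filter, mem_univ, true_and, mem_image]; simp only [dotF]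
      constructor
      · intro h
        refine ⟨x.2, ?_⟩
        have hx1 : x.1 = a.1⁻¹ := by
          field_simp
          linear_combination h - x.2 * ha2
        rw [← hx1]
      · rintro ⟨t, rfl⟩
        rw [ha2]
        field_simp
        ring
    rw [himg, Finset.card_image_of_injective _ (fun s t hst => (Prod.ext_iff.mp hst).2),
      Finset.card_univ, hF]

lemma two_point {a b x y : F × F} (hax : dotF a x = 1) (hay : dotF a y = 1)
    (hbx : dotF b x = 1) (hby : dotF b y = 1) (hxy : x ≠ y) : a = b := by
  simp only [dotF] at hax hay hbx hby
  have h1 : a.1 * (x.1 - y.1) + a.2 * (x.2 - y.2) = 0 := by linear_combination hax - hay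
  have h2 : b.1 * (x.1 - y.1) + b.2 * (x.2 - y.2) = 0 := by linear_combination hbx - hby
  have hu : x.1 - y.1 ≠ 0 ∨ x.2 - y.2 ≠ 0 := by
    by_contra hcon
    push_neg at hcon
    exact hxy (Prod.ext (by linear_combination hcon.1) (by linear_combination hcon.2))
  rcases hu with hu1 | hu2
  · have haw : a.2 * ((x.1 - y.1) * x.2 - (x.2 - y.2) * x.1) = x.1 - y.1 := by
      linear_combination (x.1 - y.1) * hax - x.1 * h1
    have hbw : b.2 * ((x.1 - y.1) * x.2 - (x.2 - y.2) * x.1) = x.1 - y.1 := by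
      linear_combination (x.1 - y.1) * hbx - x.1 * h2
    have hw : ((x.1 - y.1) * x.2 - (x.2 - y.2) * x.1) ≠ 0 := by
      intro h
      rw [h, mul_zero] at haw
      exact hu1 haw.symm
    have h22 : a.2 = b.2 := mul_right_cancel₀ hw (haw.trans hbw.symm)
    have h11 : a.1 = b.1 := by
      have : a.1 * (x.1 - y.1) = b.1 * (x.1 - y.1) := by
        linear_combination h1 - h2 - (x.2 - y.2) * h22
      exact mul_right_cancel₀ hu1 this
    exact Prod.ext h11 h22
  · have haw : a.1 * ((x.2 - y.2) * x.1 - (x.1 - y.1) * x.2) = x.2 - y.2 := by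
      linear_combination (x.2 - y.2) * hax - x.2 * h1
    have hbw : b.1 * ((x.2 - y.2) * x.1 - (x.1 - y.1) * x.2) = x.2 - y.2 := by
      linear_combination (x.2 - y.2) * hbx - x.2 * h2
    have hw : ((x.2 - y.2) * x.1 - (x.1 - y.1) * x.2) ≠ 0 := by
      intro h
      rw [h, mul_zero] at haw
      exact hu2 haw.symm
    have h11 : a.1 = b.1 := mul_right_cancel₀ hw (haw.trans hbw.symm)
    have h22 : a.2 = b.2 := by
      have : a.2 * (x.2 - y.2) = b.2 * (x.2 - y.2) := by
        linear_combination h1 - h2 - (x.1 - y.1) * h11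
      exact mul_right_cancel₀ hu2 this
    exact Prod.ext h11 h22

lemma line_inter {a b : F × F} (hab : a ≠ b) : (lineF a ∩ lineF b).card ≤ 1 := by
  rw [Finset.card_le_one]
  intro x hx y hy
  simp only [mem_inter, lineF, mem_filter, mem_univ, true_and] at hx hy
  by_contra hxy
  exact hab (two_point hx.1 hy.1 hx.2 hy.2 hxy)

lemma dot_act (a : F × F) (h : F) (x : F × F) : dotF a (act h x) = h * dotF a x := by
  simp [dotF, act]; ring

lemma dot_act' (a : F × F) (h : F) (x : F × F) : dotF (act h a) x = h * dotF a x := by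
  simp [dotF, act]; ring

lemma act_mem_line {a : F × F} {h : F} {x : F × F} :
    x ∈ lineF (act h a) ↔ act h x ∈ lineF a := by
  simp only [lineF, mem_filter, mem_univ, true_and, dot_act, dot_act']

lemma phi_inj_line {c : ℕ} (hc : 0 < c) {a : F × F} :
    ∀ x ∈ lineF a, ∀ y ∈ lineF a, phi c x = phi c y → x = y := by
  intro x hx y hy hphi
  obtain ⟨h, hh, rfl⟩ := rel_of_phi_eq hc hphi
  simp only [lineF, mem_filter, mem_univ, true_and] at hx hy
  rw [dot_act, hx, mul_one] at hy
  rw [hy, act_one]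

noncomputable def Blk (c : ℕ) (a : F × F) : Finset (F × F) := (lineF a).image (phi c)

lemma Blk_card {q c : ℕ} (hF : Fintype.card F = q) (hc : 0 < c) {a : F × F} (ha : a ≠ 0) :
    (Blk c a).card = q := by
  rw [Blk, Finset.card_image_of_injOn (phi_inj_line hc), line_card hF ha]

lemma zero_not_mem_Blk {c : ℕ} (hc : 0 < c) (a : F × F) : (0 : F × F) ∉ Blk c a := by
  rw [Blk, mem_image]
  rintro ⟨x, hx, hphi⟩
  rw [phi_eq_zero_iff hc] at hphi
  exact zero_not_mem_line a (hphi ▸ hx)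

lemma Blk_act {c : ℕ} (hc : 0 < c) {h : F} (hh : h ∈ rootsC F c) (a : F × F) :
    Blk c (act h a) = Blk c a := by
  obtain ⟨hinv, hprod⟩ := inv_mem_rootsC hc hh
  ext z
  simp only [Blk, mem_image]
  constructor
  · rintro ⟨x, hx, rfl⟩
    exact ⟨act h x, act_mem_line.mp hx, phi_act hc hh x⟩
  · rintro ⟨x, hx, rfl⟩
    refine ⟨act (h ^ (c-1)) x, ?_, phi_act hc hinv x⟩
    rw [act_mem_line, act_act, hprod, act_one]
    exact hx

lemma Blk_inter {q c : ℕ} (hF : Fintype.card F = q) (hc : 0 < c) (hq1 : 0 < q - 1)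
    (hdvd : c ∣ q - 1) {a b : F × F}
    (hdiff : ∀ h ∈ rootsC F c, b ≠ act h a) :
    (Blk c a ∩ Blk c b).card ≤ c := by
  have hsub : Blk c a ∩ Blk c b ⊆
      (rootsC F c).biUnion (fun h => (lineF a ∩ lineF (act h b)).image (phi c)) := by
    intro z hz
    rw [mem_inter] at hz
    obtain ⟨x, hx, hphix⟩ := mem_image.mp hz.1
    obtain ⟨y, hy, hphiy⟩ := mem_image.mp hz.2
    obtain ⟨h, hh, rfl⟩ := rel_of_phi_eq hc (hphix.trans hphiy.symm)
    rw [← act_mem_line] at hy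
    exact mem_biUnion.mpr ⟨h, hh, mem_image.mpr ⟨x, mem_inter.mpr ⟨hx, hy⟩, hphix⟩⟩
  calc (Blk c a ∩ Blk c b).card
      ≤ ((rootsC F c).biUnion (fun h => (lineF a ∩ lineF (act h b)).image (phi c))).card :=
        Finset.card_le_card hsub
    _ ≤ ∑ h ∈ rootsC F c, ((lineF a ∩ lineF (act h b)).image (phi c)).card :=
        Finset.card_biUnion_le
    _ ≤ ∑ _h ∈ rootsC F c, 1 := by
        apply Finset.sum_le_sum
        intro h hh
        calc ((lineF a ∩ lineF (act h b)).image (phi c)).card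
            ≤ (lineF a ∩ lineF (act h b)).card := Finset.card_image_le
          _ ≤ 1 := by
              apply line_inter
              intro hEq
              obtain ⟨hinv, hprod⟩ := inv_mem_rootsC hc hh
              exact hdiff (h ^ (c-1)) hinv (by
                rw [hEq, act_act, mul_comm, hprod, act_one])
    _ = c := by rw [Finset.sum_const, smul_eq_mul, mul_one, card_rootsC hF hc hq1 hdvd]

lemma line_zero : lineF (0 : F × F) = ∅ := by
  ext x; simp [lineF, dotF]

lemma Blk_zero {c : ℕ} : Blk c (0 : F × F) = ∅ := by
  rw [Blk, line_zero, Finset.image_empty]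

lemma Blk_orbit_of_eq {q c : ℕ} (hF : Fintype.card F = q) (hc : 0 < c) (hq1 : 0 < q - 1)
    (hdvd : c ∣ q - 1) (hcq : c < q) {a b : F × F} (ha : a ≠ 0)
    (hEq : Blk c a = Blk c b) : ∃ h ∈ rootsC F c, b = act h a := by
  by_contra hcon
  push_neg at hcon
  have h1 := Blk_inter hF hc hq1 hdvd (a := a) (b := b) hcon
  rw [hEq, Finset.inter_self] at h1
  by_cases hb : b = 0
  · rw [hb, Blk_zero] at hEq
    have h2 := Blk_card hF hc ha
    rw [hEq, Finset.card_empty] at h2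
    omega
  · rw [Blk_card hF hc hb] at h1
    omega

lemma fiber_count {α β : Type*} [DecidableEq α] [DecidableEq β] (s : Finset α) (f : α → β)
    (k : ℕ) (h : ∀ a ∈ s, (s.filter fun b => f b = f a).card = k) :
    s.card = (s.image f).card * k := by
  rw [Finset.card_eq_sum_card_image f s]
  have h2 : ∀ B ∈ s.image f, (s.filter fun a => f a = B).card = k := by
    intro B hB
    obtain ⟨a, ha, rfl⟩ := Finset.mem_image.mp hB
    exact h a ha
  rw [Finset.sum_congr rfl h2, Finset.sum_const, smul_eq_mul]

lemma act_injOn_roots {c : ℕ} (hc : 0 < c) {x : F × F} (hx : x ≠ 0) :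
    ∀ h ∈ rootsC F c, ∀ g ∈ rootsC F c, act h x = act g x → h = g := by
  intro h _ g _ hEq
  simp only [act, Prod.mk.injEq] at hEq
  have hx' : x.1 ≠ 0 ∨ x.2 ≠ 0 := by
    by_contra hcon
    push_neg at hcon
    exact hx (Prod.ext hcon.1 hcon.2)
  rcases hx' with h1 | h2
  · exact mul_right_cancel₀ h1 hEq.1
  · exact mul_right_cancel₀ h2 hEq.2

lemma card_orbit_image {c : ℕ} (hc : 0 < c) {x : F × F} (hx : x ≠ 0) :
    ((rootsC F c).image (fun h => act h x)).card = (rootsC F c).card :=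
  Finset.card_image_of_injOn (act_injOn_roots hc hx)

lemma fiber_eq_orbit {c : ℕ} (hc : 0 < c) {s : Finset (F × F)}
    (hcl : ∀ h ∈ rootsC F c, ∀ y ∈ s, act h y ∈ s) {x : F × F} (hx : x ∈ s) :
    (s.filter fun y => phi c y = phi c x) = (rootsC F c).image (fun h => act h x) := by
  ext y
  simp only [mem_filter, mem_image]
  constructor
  · rintro ⟨hys, hphi⟩
    obtain ⟨h, hh, rfl⟩ := rel_of_phi_eq hc hphi.symm
    exact ⟨h, hh, rfl⟩
  · rintro ⟨h, hh, rfl⟩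
    exact ⟨hcl h hh x hx, phi_act hc hh x⟩

lemma card_phi_image {q c : ℕ} (hF : Fintype.card F = q) (hc : 0 < c) (hq1 : 0 < q - 1)
    (hdvd : c ∣ q - 1) {s : Finset (F × F)}
    (hcl : ∀ h ∈ rootsC F c, ∀ y ∈ s, act h y ∈ s) (h0 : (0 : F × F) ∉ s) :
    s.card = (s.image (phi c)).card * c := by
  apply fiber_count
  intro a ha
  rw [fiber_eq_orbit hc hcl ha, card_orbit_image hc (fun h => h0 (h ▸ ha)),
    card_rootsC hF hc hq1 hdvd]

def rayF (e : F) : Finset (F × F) := (univ.erase (0 : F)).image (fun t => (t, t * e))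

lemma mem_rayF {e : F} {y : F × F} : y ∈ rayF e ↔ ∃ t, t ≠ 0 ∧ y = (t, t * e) := by
  simp only [rayF, mem_image, mem_erase, mem_univ, and_true]
  constructor
  · rintro ⟨t, ht, rfl⟩; exact ⟨t, ht, rfl⟩
  · rintro ⟨t, ht, rfl⟩; exact ⟨t, ht, rfl⟩

lemma rayF_card {q : ℕ} (hF : Fintype.card F = q) (e : F) : (rayF e).card = q - 1 := by
  rw [rayF, Finset.card_image_of_injective _ (fun s t hst => (Prod.ext_iff.mp hst).1),
    Finset.card_erase_of_mem (mem_univ _), Finset.card_univ, hF]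

lemma rayF_closed {c : ℕ} (hc : 0 < c) (e : F) :
    ∀ h ∈ rootsC F c, ∀ y ∈ rayF e, act h y ∈ rayF e := by
  intro h hh y hy
  obtain ⟨t, ht, rfl⟩ := mem_rayF.mp hy
  rw [mem_rayF]
  exact ⟨h * t, mul_ne_zero (ne_zero_of_mem_rootsC hc hh) ht, by simp [act]; ring⟩

lemma zero_not_mem_rayF (e : F) : (0 : F × F) ∉ rayF e := by
  rw [mem_rayF]
  rintro ⟨t, ht, hEq⟩
  exact ht (Prod.ext_iff.mp hEq.symm).1

noncomputable def phiRay (c : ℕ) (e : F) : Finset (F × F) := (rayF e).image (phi c)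

lemma phiRay_card {q c : ℕ} (hF : Fintype.card F = q) (hc : 0 < c) (hq1 : 0 < q - 1)
    (hdvd : c ∣ q - 1) (e : F) : (phiRay c e).card = (q - 1) / c := by
  have h1 := card_phi_image hF hc hq1 hdvd (rayF_closed hc e) (zero_not_mem_rayF e)
  rw [rayF_card hF] at h1
  rw [phiRay]
  exact (Nat.div_eq_of_eq_mul_left hc (by rw [h1, mul_comm])).symm

lemma zero_not_mem_phiRay {c : ℕ} (hc : 0 < c) (e : F) : (0 : F × F) ∉ phiRay c e := by
  rw [phiRay, mem_image]
  rintro ⟨y, hy, hphi⟩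
  rw [phi_eq_zero_iff hc] at hphi
  exact zero_not_mem_rayF e (hphi ▸ hy)

lemma phiRay_disjoint {c : ℕ} (hc : 0 < c) {e e' : F} (hee : e ≠ e') :
    Disjoint (phiRay c e) (phiRay c e') := by
  rw [Finset.disjoint_left]
  intro z hz hz'
  obtain ⟨y, hy, hphiy⟩ := mem_image.mp hz
  obtain ⟨y', hy', hphiy'⟩ := mem_image.mp hz'
  obtain ⟨t, ht, rfl⟩ := mem_rayF.mp hy
  obtain ⟨t', ht', rfl⟩ := mem_rayF.mp hy'
  obtain ⟨h, hh, hrel⟩ := rel_of_phi_eq hc (hphiy.trans hphiy'.symm)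
  simp only [act, Prod.mk.injEq] at hrel
  apply hee
  have h1 : t' = h * t := hrel.1
  have h2 : t' * e' = h * (t * e) := hrel.2
  rw [h1] at h2
  have h3 : h * t ≠ 0 := mul_ne_zero (ne_zero_of_mem_rootsC hc hh) ht
  exact (mul_left_cancel₀ h3 (by linear_combination h2)).symm

lemma phiRay_inter_Blk {c : ℕ} (hc : 0 < c) (e : F) (a : F × F) :
    (phiRay c e ∩ Blk c a).card ≤ 1 := by
  rw [Finset.card_le_one]
  intro z hz z' hz'
  rw [mem_inter] at hz hz'
  obtain ⟨x, hx, hphix⟩ := mem_image.mp hz.2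
  obtain ⟨y, hy, hphiy⟩ := mem_image.mp hz.1
  obtain ⟨x', hx', hphix'⟩ := mem_image.mp hz'.2
  obtain ⟨y', hy', hphiy'⟩ := mem_image.mp hz'.1
  -- move x into the ray
  obtain ⟨h, hh, hrel⟩ := rel_of_phi_eq hc (hphix.trans hphiy.symm)
  obtain ⟨h', hh', hrel'⟩ := rel_of_phi_eq hc (hphix'.trans hphiy'.symm)
  obtain ⟨hinv, hprod⟩ := inv_mem_rootsC hc hh
  obtain ⟨hinv', hprod'⟩ := inv_mem_rootsC hc hh'
  have hxr : x ∈ rayF e := by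
    have : act (h ^ (c-1)) y ∈ rayF e := rayF_closed hc e _ hinv y hy
    rw [hrel, act_act, mul_comm, hprod, act_one] at this
    exact this
  have hxr' : x' ∈ rayF e := by
    have : act (h' ^ (c-1)) y' ∈ rayF e := rayF_closed hc e _ hinv' y' hy'
    rw [hrel', act_act, mul_comm, hprod', act_one] at this
    exact this
  obtain ⟨t, ht, rfl⟩ := mem_rayF.mp hxr
  obtain ⟨t', ht', rfl⟩ := mem_rayF.mp hxr'
  simp only [lineF, mem_filter, mem_univ, true_and] at hx hx'; simp only [dotF] at hx hx'
  have hK : a.1 + a.2 * e ≠ 0 := by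
    intro hK0
    have : (1 : F) = 0 := by linear_combination -hx + t * hK0
    exact one_ne_zero this
  have htt : t = t' := by
    apply mul_right_cancel₀ hK
    linear_combination hx - hx'
  rw [← hphix, ← hphix', htt]

noncomputable def SBlk (c : ℕ) (E : Finset F) : Finset (F × F) :=
  insert 0 (E.biUnion (phiRay c))

lemma SBlk_card {q c : ℕ} (hF : Fintype.card F = q) (hc : 0 < c) (hq1 : 0 < q - 1)
    (hdvd : c ∣ q - 1) {E : Finset F} (hE : E.card = c) : (SBlk c E).card = q := by
  rw [SBlk, Finset.card_insert_of_notMem, Finset.card_biUnion]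
  · have h1 : ∀ e ∈ E, (phiRay c e).card = (q - 1) / c := fun e _ =>
      phiRay_card hF hc hq1 hdvd e
    rw [Finset.sum_congr rfl h1, Finset.sum_const, smul_eq_mul, hE,
      Nat.mul_div_cancel' hdvd]
    omega
  · intro e he e' he' hee
    exact phiRay_disjoint hc hee
  · rw [Finset.mem_biUnion]
    rintro ⟨e, he, h0⟩
    exact zero_not_mem_phiRay hc e h0

lemma SBlk_subset {c : ℕ} {E : Finset F} :
    SBlk c E ⊆ insert 0 ((univ.erase (0 : F × F)).image (phi c)) := by
  intro z hz
  rw [SBlk, mem_insert] at hz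
  rcases hz with rfl | hz
  · exact mem_insert_self _ _
  · obtain ⟨e, _, hz⟩ := Finset.mem_biUnion.mp hz
    obtain ⟨y, hy, rfl⟩ := mem_image.mp hz
    apply mem_insert_of_mem
    apply mem_image_of_mem
    rw [mem_erase]
    exact ⟨fun h => zero_not_mem_rayF e (h ▸ hy), mem_univ _⟩

lemma SBlk_inter_Blk {c : ℕ} (hc : 0 < c) {E : Finset F} (hE : E.card = c) (a : F × F) :
    (SBlk c E ∩ Blk c a).card ≤ c := by
  have hsub : SBlk c E ∩ Blk c a ⊆ E.biUnion (fun e => phiRay c e ∩ Blk c a) := by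
    intro z hz
    rw [mem_inter, SBlk, mem_insert] at hz
    rcases hz.1 with rfl | h1
    · exact absurd hz.2 (zero_not_mem_Blk hc a)
    · obtain ⟨e, he, hze⟩ := Finset.mem_biUnion.mp h1
      exact Finset.mem_biUnion.mpr ⟨e, he, mem_inter.mpr ⟨hze, hz.2⟩⟩
  calc (SBlk c E ∩ Blk c a).card ≤ _ := Finset.card_le_card hsub
    _ ≤ ∑ e ∈ E, (phiRay c e ∩ Blk c a).card := Finset.card_biUnion_le
    _ ≤ ∑ _e ∈ E, 1 := Finset.sum_le_sum (fun e _ => phiRay_inter_Blk hc e a)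
    _ = c := by rw [Finset.sum_const, smul_eq_mul, mul_one, hE]

lemma SBlk_inter_SBlk {c : ℕ} (hc : 0 < c) {E E' : Finset F} (hEE : Disjoint E E') :
    (SBlk c E ∩ SBlk c E').card ≤ 1 := by
  have hsub : SBlk c E ∩ SBlk c E' ⊆ {0} := by
    intro z hz
    rw [mem_inter, SBlk, SBlk, mem_insert, mem_insert] at hz
    rcases hz.1 with rfl | h1
    · exact mem_singleton_self _
    rcases hz.2 with rfl | h2
    · exact mem_singleton_self _
    obtain ⟨e, he, hze⟩ := Finset.mem_biUnion.mp h1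
    obtain ⟨e', he', hze'⟩ := Finset.mem_biUnion.mp h2
    have hee : e ≠ e' := fun h => (Finset.disjoint_left.mp hEE) he (h ▸ he')
    exact absurd hze' (Finset.disjoint_left.mp (phiRay_disjoint hc hee) hze)
  calc (SBlk c E ∩ SBlk c E').card ≤ ({0} : Finset (F × F)).card := Finset.card_le_card hsub
    _ = 1 := Finset.card_singleton _

theorem blocks_exist_F {q c : ℕ} (hF : Fintype.card F = q) (hc : 0 < c)
    (hq1 : 0 < q - 1) (hdvd : c ∣ q - 1) (h2c : 2 * c ≤ q - 1) :
    ∃ (B : Finset (Finset (F × F))) (Φ : Finset (F × F)),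
      B.card = (q ^ 2 - 1) / c + 2 ∧ Φ.card = (q ^ 2 - 1) / c + 1 ∧
      (∀ b ∈ B, b.card = q) ∧ (∀ b ∈ B, b ⊆ Φ) ∧
      (∀ b₁ ∈ B, ∀ b₂ ∈ B, b₁ ≠ b₂ → (b₁ ∩ b₂).card ≤ c) := by
  have hq2 : 2 ≤ q := by omega
  have hcq : c < q := by omega
  -- choose the direction sets
  have h2cq : 2 * c ≤ (univ : Finset F).card := by
    rw [Finset.card_univ, hF]; omega
  obtain ⟨E, _, hEcard⟩ := Finset.exists_subset_card_eq h2cq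
  have hcE : c ≤ E.card := by omega
  obtain ⟨E₁, hE₁sub, hE₁card⟩ := Finset.exists_subset_card_eq hcE
  set E₂ := E \ E₁ with hE₂
  have hE₂card : E₂.card = c := by
    rw [hE₂, Finset.card_sdiff_of_subset hE₁sub, hEcard, hE₁card]; omega
  have hE₁₂ : Disjoint E₁ E₂ := Finset.disjoint_sdiff
  -- the main block family from lines
  set s₁ : Finset (F × F) := univ.erase 0 with hs₁
  have hs₁card : s₁.card = q ^ 2 - 1 := by
    rw [hs₁, Finset.card_erase_of_mem (mem_univ _), Finset.card_univ, Fintype.card_prod, hF]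
    ring_nf
  have hs₁cl : ∀ h ∈ rootsC F c, ∀ y ∈ s₁, act h y ∈ s₁ := by
    intro h hh y hy
    rw [hs₁, mem_erase] at hy ⊢
    exact ⟨fun h0 => hy.1 ((act_eq_zero_iff (ne_zero_of_mem_rootsC hc hh)).mp h0), mem_univ _⟩
  have hs₁0 : (0 : F × F) ∉ s₁ := by rw [hs₁, mem_erase]; tauto
  set B₀ : Finset (Finset (F × F)) := s₁.image (Blk c) with hB₀
  have hB₀count : s₁.card = B₀.card * c := by
    rw [hB₀]
    apply fiber_count
    intro a ha
    have ha0 : a ≠ 0 := by rw [hs₁, mem_erase] at ha; exact ha.1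
    have hfib : (s₁.filter fun b => Blk c b = Blk c a)
        = (rootsC F c).image (fun h => act h a) := by
      ext b
      simp only [mem_filter, mem_image]
      constructor
      · rintro ⟨hbs, hBlk⟩
        obtain ⟨h, hh, rfl⟩ := Blk_orbit_of_eq hF hc hq1 hdvd hcq ha0 hBlk.symm
        exact ⟨h, hh, rfl⟩
      · rintro ⟨h, hh, rfl⟩
        exact ⟨hs₁cl h hh a ha, Blk_act hc hh a⟩
    rw [hfib, card_orbit_image hc ha0, card_rootsC hF hc hq1 hdvd]
  have hB₀card : B₀.card = (q ^ 2 - 1) / c := by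
    rw [← hs₁card, hB₀count]
    rw [Nat.mul_div_cancel _ hc]
  -- the color set
  set Φ₀ : Finset (F × F) := s₁.image (phi c) with hΦ₀
  have hΦ₀count : s₁.card = Φ₀.card * c := card_phi_image hF hc hq1 hdvd hs₁cl hs₁0
  have hΦ₀card : Φ₀.card = (q ^ 2 - 1) / c := by
    rw [← hs₁card, hΦ₀count, Nat.mul_div_cancel _ hc]
  have hΦ₀0 : (0 : F × F) ∉ Φ₀ := by
    rw [hΦ₀, mem_image]
    rintro ⟨y, hy, hphi⟩
    rw [phi_eq_zero_iff hc] at hphi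
    exact hs₁0 (hphi ▸ hy)
  set Φ : Finset (F × F) := insert 0 Φ₀ with hΦ
  have hΦcard : Φ.card = (q ^ 2 - 1) / c + 1 := by
    rw [hΦ, Finset.card_insert_of_notMem hΦ₀0, hΦ₀card]
  -- special blocks
  set S₁ := SBlk c E₁ with hS₁
  set S₂ := SBlk c E₂ with hS₂
  have hS₁card : S₁.card = q := SBlk_card hF hc hq1 hdvd hE₁card
  have hS₂card : S₂.card = q := SBlk_card hF hc hq1 hdvd hE₂card
  have hS₁₂ : (S₁ ∩ S₂).card ≤ 1 := SBlk_inter_SBlk hc hE₁₂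
  have hSne : S₁ ≠ S₂ := by
    intro hEq
    rw [hEq, Finset.inter_self, hS₂card] at hS₁₂
    omega
  have hSnotB : ∀ (E : Finset F), SBlk c E ∉ B₀ := by
    intro E hmem
    rw [hB₀, mem_image] at hmem
    obtain ⟨a, _, ha⟩ := hmem
    have h0 : (0 : F × F) ∈ SBlk c E := by rw [SBlk]; exact mem_insert_self _ _
    rw [← ha] at h0
    exact zero_not_mem_Blk hc a h0
  -- membership helpers for B₀
  have hB₀mem : ∀ b ∈ B₀, ∃ a : F × F, a ≠ 0 ∧ b = Blk c a := by
    intro b hb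
    rw [hB₀, mem_image] at hb
    obtain ⟨a, ha, rfl⟩ := hb
    rw [hs₁, mem_erase] at ha
    exact ⟨a, ha.1, rfl⟩
  have hBlk_sub : ∀ a : F × F, Blk c a ⊆ Φ := by
    intro a z hz
    obtain ⟨x, hx, rfl⟩ := mem_image.mp hz
    have hx0 : x ≠ 0 := fun h0 => zero_not_mem_line a (h0 ▸ hx)
    rw [hΦ]
    apply mem_insert_of_mem
    rw [hΦ₀]
    exact mem_image_of_mem _ (by rw [hs₁, mem_erase]; exact ⟨hx0, mem_univ _⟩)
  -- Blk vs Blk intersections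
  have hBlkBlk : ∀ b₁ ∈ B₀, ∀ b₂ ∈ B₀, b₁ ≠ b₂ → (b₁ ∩ b₂).card ≤ c := by
    intro b₁ hb₁ b₂ hb₂ hne
    obtain ⟨a₁, ha₁, rfl⟩ := hB₀mem b₁ hb₁
    obtain ⟨a₂, ha₂, rfl⟩ := hB₀mem b₂ hb₂
    apply Blk_inter hF hc hq1 hdvd
    intro h hh hEq
    exact hne (hEq ▸ (Blk_act hc hh a₁)).symm
  -- assemble
  refine ⟨insert S₁ (insert S₂ B₀), Φ, ?_, hΦcard, ?_, ?_, ?_⟩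
  · rw [Finset.card_insert_of_notMem, Finset.card_insert_of_notMem (hSnotB E₂), hB₀card]
    rw [mem_insert]
    push_neg
    exact ⟨hSne, hSnotB E₁⟩
  · intro b hb
    rcases mem_insert.mp hb with rfl | hb
    · exact hS₁card
    rcases mem_insert.mp hb with rfl | hb
    · exact hS₂card
    obtain ⟨a, ha0, rfl⟩ := hB₀mem b hb
    exact Blk_card hF hc ha0
  · intro b hb
    rcases mem_insert.mp hb with rfl | hb
    · rw [hS₁]; rw [hΦ, hΦ₀, hs₁]; exact SBlk_subset
    rcases mem_insert.mp hb with rfl | hb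
    · rw [hS₂]; rw [hΦ, hΦ₀, hs₁]; exact SBlk_subset
    obtain ⟨a, _, rfl⟩ := hB₀mem b hb
    exact hBlk_sub a
  · have hScap : ∀ (E : Finset F), E.card = c → ∀ b ∈ B₀, ((SBlk c E) ∩ b).card ≤ c := by
      intro E hE b hb
      obtain ⟨a, _, rfl⟩ := hB₀mem b hb
      exact SBlk_inter_Blk hc hE a
    intro b₁ hb₁ b₂ hb₂ hne
    rcases mem_insert.mp hb₁ with rfl | hb₁
    · rcases mem_insert.mp hb₂ with rfl | hb₂
      · exact absurd rfl hne
      rcases mem_insert.mp hb₂ with rfl | hb₂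
      · omega
      · exact hScap E₁ hE₁card b₂ hb₂
    rcases mem_insert.mp hb₁ with rfl | hb₁
    · rcases mem_insert.mp hb₂ with rfl | hb₂
      · rw [Finset.inter_comm]; omega
      rcases mem_insert.mp hb₂ with rfl | hb₂
      · exact absurd rfl hne
      · exact hScap E₂ hE₂card b₂ hb₂
    · rcases mem_insert.mp hb₂ with rfl | hb₂
      · rw [Finset.inter_comm]; exact hScap E₁ hE₁card b₁ hb₁
      rcases mem_insert.mp hb₂ with rfl | hb₂
      · rw [Finset.inter_comm]; exact hScap E₂ hE₂card b₁ hb₁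
      · exact hBlkBlk b₁ hb₁ b₂ hb₂ hne

end Constr

theorem blocks_exist_N (q c : ℕ) (hq : IsPrimePow q) (hc : 0 < c)
    (hq1 : 0 < q - 1) (hdvd : c ∣ q - 1) (h2c : 2 * c ≤ q - 1) :
    ∃ (B : Finset (Finset ℕ)) (Φ : Finset ℕ),
      B.card = (q ^ 2 - 1) / c + 2 ∧ Φ.card = (q ^ 2 - 1) / c + 1 ∧
      (∀ b ∈ B, b.card = q) ∧ (∀ b ∈ B, b ⊆ Φ) ∧
      (∀ b₁ ∈ B, ∀ b₂ ∈ B, b₁ ≠ b₂ → (b₁ ∩ b₂).card ≤ c) ∧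
      (∀ x ∈ Φ, 2 ∣ x) := by
  obtain ⟨p, k, hp, hk, rfl⟩ := hq
  haveI : Fact p.Prime := ⟨hp.nat_prime⟩
  let F := GaloisField p k
  haveI : Fintype F := Fintype.ofFinite F
  letI : DecidableEq F := Classical.decEq F
  have hF : Fintype.card F = p ^ k := by
    rw [← Nat.card_eq_fintype_card]
    exact GaloisField.card p k hk.ne'
  obtain ⟨B, Φ, hBcard, hΦcard, hbq, hbΦ, hinter⟩ :=
    blocks_exist_F (F := F) hF hc hq1 hdvd h2c
  -- embed into ℕ (even numbers)
  set ν : F × F → ℕ := fun v => 2 * ((Fintype.equivFin (F × F)) v).val with hν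
  have hνinj : Function.Injective ν := by
    intro x y hxy
    have h2 : ((Fintype.equivFin (F × F)) x).val = ((Fintype.equivFin (F × F)) y).val :=
      Nat.eq_of_mul_eq_mul_left two_pos hxy
    exact (Fintype.equivFin (F × F)).injective (Fin.ext h2)
  refine ⟨B.image (fun b => b.image ν), Φ.image ν, ?_, ?_, ?_, ?_, ?_, ?_⟩
  · rw [Finset.card_image_of_injective _ (Finset.image_injective hνinj), hBcard]
  · rw [Finset.card_image_of_injective _ hνinj, hΦcard]
  · intro b hb
    obtain ⟨b₀, hb₀, rfl⟩ := Finset.mem_image.mp hb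
    rw [Finset.card_image_of_injective _ hνinj]
    exact hbq b₀ hb₀
  · intro b hb
    obtain ⟨b₀, hb₀, rfl⟩ := Finset.mem_image.mp hb
    exact Finset.image_subset_image (hbΦ b₀ hb₀)
  · intro b₁ hb₁ b₂ hb₂ hne
    obtain ⟨a₁, ha₁, rfl⟩ := Finset.mem_image.mp hb₁
    obtain ⟨a₂, ha₂, rfl⟩ := Finset.mem_image.mp hb₂
    have hane : a₁ ≠ a₂ := fun h => hne (h ▸ rfl)
    rw [← Finset.image_inter _ _ hνinj, Finset.card_image_of_injective _ hνinj]
    exact hinter a₁ ha₁ a₂ ha₂ hane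
  · intro x hx
    obtain ⟨v, _, rfl⟩ := Finset.mem_image.mp hx
    exact ⟨_, rfl⟩

theorem lower_exists (q c n : ℕ) (hq : IsPrimePow q) (hc : 0 < c)
    (hlt : c < q - 1) (hdvd : c ∣ q - 1)
    (hlow : q ^ 2 - 1 + 2 * c ≤ c * n) :
    ∃ L : Fin n → Finset ℕ, (∀ v, (L v).card = q) ∧
      (∀ u v, u ≠ v → ((L u) ∩ (L v)).card ≤ c) ∧
      ¬∃ f : Fin n → ℕ, Function.Injective f ∧ ∀ v, f v ∈ L v := by
  classical
  have hq2 : 2 ≤ q := by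
    rcases Nat.lt_or_ge q 2 with h | h
    · interval_cases q <;> omega
    · exact h
  have hq1 : 0 < q - 1 := by omega
  have h2c : 2 * c ≤ q - 1 := by
    obtain ⟨m, hm⟩ := hdvd
    rcases Nat.lt_or_ge m 2 with h | h
    · interval_cases m <;> omega
    · calc 2 * c ≤ m * c := Nat.mul_le_mul_right c h
        _ = c * m := mul_comm _ _
        _ = q - 1 := hm.symm
  obtain ⟨B, Φ, hBcard, hΦcard, hbq, hbΦ, hinter, heven⟩ :=
    blocks_exist_N q c hq hc hq1 hdvd h2c
  set s₀ := (q ^ 2 - 1) / c + 2 with hs₀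
  have hcdvd2 : c ∣ q ^ 2 - 1 := by
    have h1 : (q - 1) * (q + 1) + 1 = q ^ 2 := by
      rcases Nat.exists_eq_add_of_le hq2 with ⟨m, rfl⟩
      have h2 : (2 + m - 1) = m + 1 := by omega
      rw [h2]; ring
    have h2 : q ^ 2 - 1 = (q - 1) * (q + 1) := by omega
    rw [h2]
    exact Dvd.dvd.mul_right hdvd (q + 1)
  have hs₀n : s₀ ≤ n := by
    have h1 : c * s₀ = q ^ 2 - 1 + 2 * c := by
      rw [hs₀, Nat.mul_add, Nat.mul_div_cancel' hcdvd2]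
      ring
    have h2 : c * s₀ ≤ c * n := by rw [h1]; exact hlow
    exact Nat.le_of_mul_le_mul_left h2 hc
  -- enumerate the blocks
  have hBfin : Fintype.card ↥B = s₀ := by rw [Fintype.card_coe, hBcard]
  set eB : ↥B ≃ Fin s₀ := Fintype.equivFinOfCardEq hBfin with heB
  set L : Fin n → Finset ℕ := fun v =>
    if h : v.val < s₀ then (eB.symm ⟨v.val, h⟩ : Finset ℕ)
    else (Finset.range q).image (fun j => 2 * (v.val * q + j) + 1) with hL
  have hLblock : ∀ (v : Fin n) (h : v.val < s₀), L v = (eB.symm ⟨v.val, h⟩ : Finset ℕ) := by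
    intro v h; rw [hL]; simp [h]
  have hLfill : ∀ (v : Fin n), ¬ v.val < s₀ →
      L v = (Finset.range q).image (fun j => 2 * (v.val * q + j) + 1) := by
    intro v h; rw [hL]; simp [h]
  have hfillinj : ∀ m : ℕ, Function.Injective (fun j => 2 * (m * q + j) + 1) := by
    intro m j j' h
    have h2 : 2 * (m * q + j) + 1 = 2 * (m * q + j') + 1 := h
    omega
  refine ⟨L, ?_, ?_, ?_⟩
  · intro v
    by_cases h : v.val < s₀
    · rw [hLblock v h]
      exact hbq _ (eB.symm ⟨v.val, h⟩).2
    · rw [hLfill v h, Finset.card_image_of_injective _ (hfillinj v.val), Finset.card_range]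
  · intro u v huv
    by_cases hu : u.val < s₀ <;> by_cases hv : v.val < s₀
    · rw [hLblock u hu, hLblock v hv]
      apply hinter _ (eB.symm ⟨u.val, hu⟩).2 _ (eB.symm ⟨v.val, hv⟩).2
      intro hEq
      apply huv
      have h1 : eB.symm ⟨u.val, hu⟩ = eB.symm ⟨v.val, hv⟩ := Subtype.ext hEq
      have h2 := eB.symm.injective h1
      have h3 : u.val = v.val := by
        have := congrArg Fin.val h2
        simpa using this
      exact Fin.ext h3
    · rw [hLblock u hu, hLfill v hv]
      have : (eB.symm ⟨u.val, hu⟩ : Finset ℕ) ∩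
          (Finset.range q).image (fun j => 2 * (v.val * q + j) + 1) = ∅ := by
        rw [Finset.eq_empty_iff_forall_notMem]
        intro x hx
        rw [Finset.mem_inter] at hx
        have hx1 : 2 ∣ x := heven x (hbΦ _ (eB.symm ⟨u.val, hu⟩).2 hx.1)
        obtain ⟨j, _, hj⟩ := Finset.mem_image.mp hx.2
        omega
      rw [this]
      simp [hc.le]
    · rw [hLfill u hu, hLblock v hv]
      have : (Finset.range q).image (fun j => 2 * (u.val * q + j) + 1) ∩
          (eB.symm ⟨v.val, hv⟩ : Finset ℕ) = ∅ := by
        rw [Finset.eq_empty_iff_forall_notMem]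
        intro x hx
        rw [Finset.mem_inter] at hx
        have hx1 : 2 ∣ x := heven x (hbΦ _ (eB.symm ⟨v.val, hv⟩).2 hx.2)
        obtain ⟨j, _, hj⟩ := Finset.mem_image.mp hx.1
        omega
      rw [this]
      simp [hc.le]
    · rw [hLfill u hu, hLfill v hv]
      have : (Finset.range q).image (fun j => 2 * (u.val * q + j) + 1) ∩
          (Finset.range q).image (fun j => 2 * (v.val * q + j) + 1) = ∅ := by
        rw [Finset.eq_empty_iff_forall_notMem]
        intro x hx
        rw [Finset.mem_inter] at hx
        obtain ⟨j, hjq, hj⟩ := Finset.mem_image.mp hx.1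
        obtain ⟨j', hjq', hj'⟩ := Finset.mem_image.mp hx.2
        rw [Finset.mem_range] at hjq hjq'
        have : u.val * q + j = v.val * q + j' := by omega
        have huvval : u.val ≠ v.val := fun h => huv (Fin.ext h)
        rcases Nat.lt_or_ge u.val v.val with h | h
        · nlinarith
        · have h2 : v.val < u.val := by omega
          nlinarith
      rw [this]
      simp [hc.le]
  · rintro ⟨f, hfinj, hfmem⟩
    -- the first s₀ vertices all map into Φ, |Φ| = s₀ - 1
    have hmap : ∀ i : Fin s₀, f ⟨i.val, lt_of_lt_of_le i.isLt hs₀n⟩ ∈ Φ := by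
      intro i
      have h1 : (⟨i.val, lt_of_lt_of_le i.isLt hs₀n⟩ : Fin n).val < s₀ := i.isLt
      have h2 := hfmem ⟨i.val, lt_of_lt_of_le i.isLt hs₀n⟩
      rw [hLblock _ h1] at h2
      exact hbΦ _ (eB.symm ⟨i.val, h1⟩).2 h2
    have hginj : Function.Injective
        (fun i : Fin s₀ => f ⟨i.val, lt_of_lt_of_le i.isLt hs₀n⟩) := by
      intro i j hij
      have := hfinj hij
      have := congrArg Fin.val this
      exact Fin.ext (by simpa using this)
    have hcard : s₀ ≤ Φ.card := by
      calc s₀ = (Finset.univ : Finset (Fin s₀)).card := by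
            rw [Finset.card_univ, Fintype.card_fin]
        _ ≤ Φ.card := Finset.card_le_card_of_injOn _
            (fun i _ => hmap i) (fun i _ j _ h => hginj h)
    rw [hΦcard] at hcard
    omega


/-- `χ_l(K_n, c)`: the least `k` such that the complete graph `K_n` admits a
proper coloring from every `(k, c)`-list assignment. -/
noncomputable def chiListKn (n c : ℕ) : ℕ :=
  sInf {k : ℕ | ∀ L : Fin n → Finset ℕ,
    (∀ v, (L v).card = k) →
    (∀ u v, u ≠ v → ((L u) ∩ (L v)).card ≤ c) →
    ∃ f : Fin n → ℕ, Function.Injective f ∧ ∀ v, f v ∈ L v}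

/-- Main theorem, part (ii): if `q` is a prime power, `c < q − 1` and `c ∣ q − 1`,
then `χ_l(K_n, c) = q + 1` for all `n` with
`(q² − 1)/c + 2 ≤ n` and `c(c+1)·n ≤ (c+1)q² + (c+3)q − 2(c−1)`. -/
theorem chi_list_exact (q c n : ℕ)
    (hq : IsPrimePow q) (hc : 0 < c) (hlt : c < q - 1) (hdvd : c ∣ q - 1)
    (hlow : q ^ 2 - 1 + 2 * c ≤ c * n)
    (hhigh : (c : ℤ) * (c + 1) * n ≤ (c + 1) * q ^ 2 + (c + 3) * q - 2 * (c - 1)) :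
    chiListKn n c = q + 1 := by
  classical
  set S := {k : ℕ | ∀ L : Fin n → Finset ℕ,
    (∀ v, (L v).card = k) →
    (∀ u v, u ≠ v → ((L u) ∩ (L v)).card ≤ c) →
    ∃ f : Fin n → ℕ, Function.Injective f ∧ ∀ v, f v ∈ L v} with hS
  have hmem : (q + 1) ∈ S := by
    intro L hcard hint
    exact upper_exists q c n hc hhigh L hcard hint
  have hnot : q ∉ S := by
    obtain ⟨L, h1, h2, h3⟩ := lower_exists q c n hq hc hlt hdvd hlow
    intro hSq
    exact h3 (hSq L h1 h2)
  have hup : ∀ k, k ∈ S → k + 1 ∈ S := by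
    intro k hk L hcard hint
    have hfull : ∀ v, (L v).Nonempty := fun v =>
      Finset.card_pos.mp (by rw [hcard v]; omega)
    set L' : Fin n → Finset ℕ := fun v => (L v).erase ((L v).min' (hfull v)) with hL'
    have hcard' : ∀ v, (L' v).card = k := by
      intro v
      rw [hL']
      rw [Finset.card_erase_of_mem (Finset.min'_mem _ _), hcard v]
      omega
    have hint' : ∀ u v, u ≠ v → ((L' u) ∩ (L' v)).card ≤ c := fun u v huv =>
      le_trans (Finset.card_le_card
        (Finset.inter_subset_inter (Finset.erase_subset _ _) (Finset.erase_subset _ _)))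
        (hint u v huv)
    obtain ⟨f, hfinj, hfmem⟩ := hk L' hcard' hint'
    exact ⟨f, hfinj, fun v => Finset.erase_subset _ _ (hfmem v)⟩
  have hmono : ∀ d k, k ∈ S → (k + d) ∈ S := by
    intro d
    induction d with
    | zero => intro k hk; rwa [Nat.add_zero]
    | succ d ih =>
        intro k hk
        have h1 := hup (k + d) (ih k hk)
        have h2 : k + (d + 1) = (k + d) + 1 := by omega
        rwa [h2]
  rw [chiListKn, ← hS]
  apply le_antisymm
  · exact Nat.sInf_le hmem
  · apply le_csInf ⟨q + 1, hmem⟩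
    intro b hb
    by_contra hlt2
    push_neg at hlt2
    have hbq : b + (q - b) = q := by omega
    have : q ∈ S := by
      have := hmono (q - b) b hb
      rwa [hbq] at this
    exact hnot this
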